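/- In any local swap equilibrium of a local 2-type Swap Schelling Game on a connected graph with maximum degree Δ ≤ n − 2 (n vertices, Δ ≥ 2), the average utility of an agent is at least 1/(2(Δ² − Δ + 1)); hence the Local Price of Anarchy is at most 4(Δ² − Δ + 1). -/

import Mathlib

open SimpleGraph Finset
open scoped Classical
set_option linter.unusedSectionVars false
set_option maxHeartbeats 1000000

noncomputable def ssgUtil {V A : Type*} [Fintype V] [DecidableEq V]
    (G : SimpleGraph V) [DecidableRel G.Adj]
    {k : ℕ} (c : A → Fin k) (σ : A ≃ V) (i : A) : ℚ :=
  (((G.neighborFinset (σ i)).filter (fun v => c (σ.symm v) = c i)).card : ℚ) /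
    (G.degree (σ i) : ℚ)

def ssgSwap {V A : Type*} [DecidableEq V] (σ : A ≃ V) (i j : A) : A ≃ V :=
  σ.trans (Equiv.swap (σ i) (σ j))

def ssgProfitable {V A : Type*} [Fintype V] [DecidableEq V]
    (G : SimpleGraph V) [DecidableRel G.Adj]
    {k : ℕ} (c : A → Fin k) (σ : A ≃ V) (i j : A) : Prop :=
  c i ≠ c j ∧
    ssgUtil G c σ i < ssgUtil G c (ssgSwap σ i j) i ∧
    ssgUtil G c σ j < ssgUtil G c (ssgSwap σ i j) j

def ssgEquilibrium {V A : Type*} [Fintype V] [DecidableEq V]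
    (G : SimpleGraph V) [DecidableRel G.Adj]
    {k : ℕ} (c : A → Fin k) (σ : A ≃ V) : Prop :=
  ∀ i j : A, ¬ ssgProfitable G c σ i j

def ssgLocalEquilibrium {V A : Type*} [Fintype V] [DecidableEq V]
    (G : SimpleGraph V) [DecidableRel G.Adj]
    {k : ℕ} (c : A → Fin k) (σ : A ≃ V) : Prop :=
  ∀ i j : A, G.Adj (σ i) (σ j) → ¬ ssgProfitable G c σ i j

noncomputable def ssgWelfare {V A : Type*} [Fintype V] [DecidableEq V] [Fintype A]
    (G : SimpleGraph V) [DecidableRel G.Adj]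
    {k : ℕ} (c : A → Fin k) (σ : A ≃ V) : ℚ :=
  ∑ i : A, ssgUtil G c σ i

noncomputable def ssgPhi {V A : Type*} [Fintype V] [DecidableEq V]
    (G : SimpleGraph V) [DecidableRel G.Adj]
    {k : ℕ} (c : A → Fin k) (σ : A ≃ V) : ℕ :=
  (G.edgeFinset.filter (fun e => ∀ u ∈ e, ∀ v ∈ e, c (σ.symm u) = c (σ.symm v))).card


section
variable {V : Type*} [Fintype V] [DecidableEq V] (G : SimpleGraph V) [DecidableRel G.Adj]

noncomputable def vU (χ : V → Fin 2) (v : V) : ℚ :=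
  (((G.neighborFinset v).filter (fun w => χ w = χ v)).card : ℚ) / (G.degree v : ℚ)

def vEq (χ : V → Fin 2) : Prop := ∀ x y, G.Adj x y → χ x ≠ χ y →
  (((G.neighborFinset y).filter (fun w => w ≠ x ∧ χ w = χ x)).card : ℚ)/(G.degree y : ℚ) ≤ vU G χ x ∨
  (((G.neighborFinset x).filter (fun w => w ≠ y ∧ χ w = χ y)).card : ℚ)/(G.degree x : ℚ) ≤ vU G χ y

lemma vU_nonneg (χ : V → Fin 2) (v : V) : 0 ≤ vU G χ v := by unfold vU; positivity

lemma closed_eq_univ {G : SimpleGraph V} (hconn : G.Connected) (S : Finset V) (hne : S.Nonempty)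
    (hcl : ∀ a ∈ S, ∀ b, G.Adj a b → b ∈ S) : S = Finset.univ := by
  obtain ⟨a, ha⟩ := hne
  have key : ∀ {x y : V}, G.Walk x y → x ∈ S → y ∈ S := by
    intro x y p
    induction p with
    | nil => exact id
    | cons h q ih => exact fun hx => ih (hcl _ hx _ h)
  ext v
  simp only [Finset.mem_univ, iff_true]
  exact key (hconn a v).some ha

lemma degree_pos_of_connected {G : SimpleGraph V} [DecidableRel G.Adj] (hconn : G.Connected)
    (hcard : 1 < Fintype.card V) (v : V) : 0 < G.degree v := by
  rw [G.degree_pos_iff_exists_adj]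
  obtain ⟨w, hw⟩ := Fintype.exists_ne_of_one_lt_card hcard v
  obtain ⟨p⟩ := hconn v w
  cases p with
  | nil => exact (hw rfl).elim
  | cons h q => exact ⟨_, h⟩

lemma fin2_eq {a b t : Fin 2} (hab : a ≠ b) (h : t ≠ a) : t = b := by
  revert hab h; revert a b t; decide

lemma main_bound (hconn : G.Connected) (hΔ2 : 2 ≤ G.maxDegree)
    (hΔ : G.maxDegree ≤ Fintype.card V - 2) (χ : V → Fin 2) (hE : vEq G χ) :
    (Fintype.card V : ℚ) ≤
      2 * ((G.maxDegree : ℚ) ^ 2 - (G.maxDegree : ℚ) + 1) * ∑ v, vU G χ v := by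
  classical
  set n := Fintype.card V with hn
  have hn4 : 4 ≤ n := by omega
  have hdpos : ∀ v, 0 < G.degree v := degree_pos_of_connected hconn (by omega)
  have hdQ : ∀ v, (0:ℚ) < (G.degree v : ℚ) := fun v => by exact_mod_cast hdpos v
  have hcardN : ∀ v, (G.neighborFinset v).card = G.degree v := fun v =>
    G.card_neighborFinset_eq_degree v
  have hdΔ : ∀ v, G.degree v ≤ G.maxDegree := fun v => G.degree_le_maxDegree v
  -- zero utility characterization
  have hzero : ∀ v, vU G χ v = 0 →
      ((G.neighborFinset v).filter (fun w => χ w = χ v)).card = 0 := by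
    intro v h
    unfold vU at h
    rcases div_eq_zero_iff.mp h with h' | h'
    · exact_mod_cast h'
    · exact absurd h' (ne_of_gt (hdQ v))
  have hzero' : ∀ v, vU G χ v = 0 → ∀ w, G.Adj v w → χ w ≠ χ v := by
    intro v h w hadj
    have hempty := Finset.card_eq_zero.mp (hzero v h)
    intro hcw
    have : w ∈ (G.neighborFinset v).filter (fun w => χ w = χ v) := by
      simp [G.mem_neighborFinset, hadj, hcw]
    rw [hempty] at this
    exact absurd this (Finset.notMem_empty w)
  -- Lemma A
  have hA : ∀ x, vU G χ x = 0 → 2 ≤ G.degree x →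
      ∃ y, G.Adj x y ∧ (1:ℚ)/2 ≤ vU G χ y := by
    intro x hx0 hdx
    by_contra hno
    push_neg at hno
    have hleaf : ∀ y, G.Adj x y → G.degree y = 1 := by
      intro y hadj
      have hcyx : χ y ≠ χ x := hzero' x hx0 y hadj
      rcases hE x y hadj hcyx.symm with hL | hR
      · -- left: swap blocked by x side: all nbrs of y except x colored χ y
        rw [vU] at hL
        have hx0' : ((G.neighborFinset x).filter (fun w => χ w = χ x)).card = 0 := hzero x hx0
        rw [hx0'] at hL
        simp only [Nat.cast_zero, zero_div] at hL
        have hcard0 : (((G.neighborFinset y).filter (fun w => w ≠ x ∧ χ w = χ x)).card : ℚ) = 0 := by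
          have hnn : (0:ℚ) ≤ (((G.neighborFinset y).filter (fun w => w ≠ x ∧ χ w = χ x)).card : ℚ) := by positivity
          have := (div_le_iff₀ (hdQ y)).mp hL
          nlinarith [hdQ y]
        have hempty : ((G.neighborFinset y).filter (fun w => w ≠ x ∧ χ w = χ x)) = ∅ :=
          Finset.card_eq_zero.mp (by exact_mod_cast hcard0)
        -- so all nbrs of y other than x have color χ y
        by_cases hdy : 2 ≤ G.degree y
        · -- then vU y ≥ 1/2, contradiction with hno
          have hsub : (G.neighborFinset y).erase x ⊆
              (G.neighborFinset y).filter (fun w => χ w = χ y) := by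
            intro w hw
            rw [Finset.mem_erase] at hw
            rw [Finset.mem_filter]
            refine ⟨hw.2, ?_⟩
            have hwx : χ w ≠ χ x := by
              intro hcw
              have : w ∈ (G.neighborFinset y).filter (fun w => w ≠ x ∧ χ w = χ x) := by
                rw [Finset.mem_filter]; exact ⟨hw.2, hw.1, hcw⟩
              rw [hempty] at this
              exact absurd this (Finset.notMem_empty w)
            exact fin2_eq hcyx.symm hwx
          have hxy : x ∈ G.neighborFinset y := by
            rw [G.mem_neighborFinset]; exact hadj.symm
          have hcards : G.degree y - 1 ≤
              ((G.neighborFinset y).filter (fun w => χ w = χ y)).card := by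
            calc G.degree y - 1 = ((G.neighborFinset y).erase x).card := by
                  rw [Finset.card_erase_of_mem hxy, hcardN]
              _ ≤ _ := Finset.card_le_card hsub
          have h12 : (1:ℚ)/2 ≤ vU G χ y := by
            rw [vU, le_div_iff₀ (hdQ y)]
            have hc : ((G.degree y : ℚ) - 1) ≤
                (((G.neighborFinset y).filter (fun w => χ w = χ y)).card : ℚ) := by
              have := hcards
              have h1 : (1:ℕ) ≤ G.degree y := hdpos y
              have : ((G.degree y - 1 : ℕ) : ℚ) ≤ _ := Nat.cast_le.mpr hcards
              rwa [Nat.cast_sub h1, Nat.cast_one] at this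
            have hdy' : (2:ℚ) ≤ (G.degree y : ℚ) := by exact_mod_cast hdy
            nlinarith
          exact absurd h12 (not_le.mpr (hno y hadj))
        · have := hdpos y; omega
      · -- right: vU y ≥ (deg x - 1)/deg x ≥ 1/2
        have hsub : (G.neighborFinset x).erase y ⊆
            (G.neighborFinset x).filter (fun w => w ≠ y ∧ χ w = χ y) := by
          intro w hw
          rw [Finset.mem_erase] at hw
          rw [Finset.mem_filter]
          refine ⟨hw.2, hw.1, ?_⟩
          have hadjw : G.Adj x w := (G.mem_neighborFinset _ _).mp hw.2
          exact fin2_eq hcyx.symm (hzero' x hx0 w hadjw)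
        have hyx : y ∈ G.neighborFinset x := by rw [G.mem_neighborFinset]; exact hadj
        have hcards : G.degree x - 1 ≤
            ((G.neighborFinset x).filter (fun w => w ≠ y ∧ χ w = χ y)).card := by
          calc G.degree x - 1 = ((G.neighborFinset x).erase y).card := by
                rw [Finset.card_erase_of_mem hyx, hcardN]
            _ ≤ _ := Finset.card_le_card hsub
        have h12 : (1:ℚ)/2 ≤ vU G χ y := by
          refine le_trans ?_ hR
          rw [le_div_iff₀ (hdQ x)]
          have hc : ((G.degree x : ℚ) - 1) ≤
              (((G.neighborFinset x).filter (fun w => w ≠ y ∧ χ w = χ y)).card : ℚ) := by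
            have h1 : (1:ℕ) ≤ G.degree x := hdpos x
            have : ((G.degree x - 1 : ℕ) : ℚ) ≤ _ := Nat.cast_le.mpr hcards
            rwa [Nat.cast_sub h1, Nat.cast_one] at this
          have hdx' : (2:ℚ) ≤ (G.degree x : ℚ) := by exact_mod_cast hdx
          nlinarith
        exact absurd h12 (not_le.mpr (hno y hadj))
    -- star contradiction
    have hS : (insert x (G.neighborFinset x)) = Finset.univ := by
      apply closed_eq_univ hconn _ ⟨x, Finset.mem_insert_self x _⟩
      intro a ha b hab
      rcases Finset.mem_insert.mp ha with rfl | ha'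
      · exact Finset.mem_insert_of_mem ((G.mem_neighborFinset _ _).mpr hab)
      · have hadja : G.Adj x a := (G.mem_neighborFinset _ _).mp ha'
        have hda : G.degree a = 1 := hleaf a hadja
        have hxa : x ∈ G.neighborFinset a := (G.mem_neighborFinset _ _).mpr hadja.symm
        have hsingle : G.neighborFinset a = {x} := by
          apply Finset.eq_singleton_iff_unique_mem.mpr
          refine ⟨hxa, ?_⟩
          intro z hz
          by_contra hzx
          have h2 : 2 ≤ (G.neighborFinset a).card := by
            have : ({z, x} : Finset V) ⊆ G.neighborFinset a := by
              intro t ht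
              rcases Finset.mem_insert.mp ht with rfl | ht'
              · exact hz
              · rwa [Finset.mem_singleton.mp ht']
            calc 2 = ({z, x} : Finset V).card := by rw [Finset.card_insert_of_notMem (by simpa using hzx), Finset.card_singleton]
              _ ≤ _ := Finset.card_le_card this
          rw [hcardN, hda] at h2
          omega
        have : b ∈ G.neighborFinset a := (G.mem_neighborFinset _ _).mpr hab
        rw [hsingle] at this
        rw [Finset.mem_singleton.mp this]
        exact Finset.mem_insert_self x _
    have hcard : n ≤ 1 + G.degree x := by
      calc n = (insert x (G.neighborFinset x)).card := by rw [hS, Finset.card_univ, hn]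
        _ ≤ (G.neighborFinset x).card + 1 := Finset.card_insert_le _ _
        _ = 1 + G.degree x := by rw [hcardN]; omega
    have := hdΔ x
    omega
  -- unique neighbor of a degree-1 vertex
  have huniq : ∀ a b, G.degree a = 1 → G.Adj a b → G.neighborFinset a = {b} := by
    intro a b hda hab
    have h1 : (G.neighborFinset a).card = 1 := by rw [hcardN]; exact hda
    obtain ⟨c, hc⟩ := Finset.card_eq_one.mp h1
    have hb : b ∈ G.neighborFinset a := (G.mem_neighborFinset _ _).mpr hab
    rw [hc] at hb ⊢
    rw [Finset.mem_singleton.mp hb]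
  -- Lemma B
  have hB : ∀ x, G.degree x = 1 → ∀ y, G.Adj x y → 2 ≤ G.degree y := by
    intro x hdx1 y hxy
    by_contra hdy
    have hdy1 : G.degree y = 1 := by have := hdpos y; omega
    have hS : ({x, y} : Finset V) = Finset.univ := by
      apply closed_eq_univ hconn _ ⟨x, Finset.mem_insert_self x _⟩
      intro a ha b hab
      rcases Finset.mem_insert.mp ha with rfl | ha'
      · have := huniq a y hdx1 hxy
        have hb : b ∈ G.neighborFinset a := (G.mem_neighborFinset _ _).mpr hab
        rw [this, Finset.mem_singleton] at hb
        rw [hb]; exact Finset.mem_insert_of_mem (Finset.mem_singleton_self y)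
      · rw [Finset.mem_singleton.mp ha'] at hab
        have := huniq y x hdy1 hxy.symm
        have hb : b ∈ G.neighborFinset y := (G.mem_neighborFinset _ _).mpr hab
        rw [this, Finset.mem_singleton] at hb
        rw [hb]; exact Finset.mem_insert_self x _
    have : n ≤ 2 := by
      calc n = ({x, y} : Finset V).card := by rw [hS, Finset.card_univ, hn]
        _ ≤ 2 := Finset.card_insert_le _ _ |>.trans (by simp)
    omega
  -- witness function
  have hWex : ∀ x : V, ∃ w : V, vU G χ x = 0 →
      vU G χ w ≠ 0 ∧
      (G.Adj x w ∨ ((1:ℚ)/2 ≤ vU G χ w ∧ ∃ y, G.Adj x y ∧ vU G χ y = 0 ∧ G.Adj y w)) ∧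
      (¬ ((1:ℚ)/2 ≤ vU G χ w) → G.Adj x w) := by
    intro x
    by_cases hx0 : vU G χ x = 0
    · by_cases hdx : 2 ≤ G.degree x
      · obtain ⟨y, hy, hy2⟩ := hA x hx0 hdx
        exact ⟨y, fun _ => ⟨ne_of_gt (lt_of_lt_of_le (by norm_num) hy2),
          Or.inl hy, fun hlt => absurd hy2 hlt⟩⟩
      · have hdx1 : G.degree x = 1 := by have := hdpos x; omega
        obtain ⟨y, hy⟩ := Finset.card_pos.mp
          (show 0 < (G.neighborFinset x).card by rw [hcardN]; exact hdpos x)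
        have hxy : G.Adj x y := (G.mem_neighborFinset _ _).mp hy
        by_cases hy0 : vU G χ y = 0
        · have hdy : 2 ≤ G.degree y := hB x hdx1 y hxy
          obtain ⟨z, hz, hz2⟩ := hA y hy0 hdy
          exact ⟨z, fun _ => ⟨ne_of_gt (lt_of_lt_of_le (by norm_num) hz2),
            Or.inr ⟨hz2, y, hxy, hy0, hz⟩, fun hlt => absurd hz2 hlt⟩⟩
        · exact ⟨y, fun _ => ⟨hy0, Or.inl hxy, fun _ => hxy⟩⟩
    · exact ⟨x, fun h => absurd h hx0⟩
  choose W hW using hWex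
  -- partition
  set P := Finset.univ.filter (fun v => ¬ vU G χ v = 0) with hP
  set Z := Finset.univ.filter (fun v => vU G χ v = 0) with hZ
  have hPZ : Z.card + P.card = n := by
    rw [hZ, hP]
    rw [show n = (Finset.univ : Finset V).card from (Finset.card_univ).symm]
    exact Finset.card_filter_add_card_filter_not _
  have hfib : Z.card = ∑ v ∈ P, (Z.filter (fun x => W x = v)).card := by
    apply Finset.card_eq_sum_card_fiberwise
    intro x hx
    rw [hZ, Finset.mem_coe, Finset.mem_filter] at hx
    rw [hP, Finset.mem_coe, Finset.mem_filter]
    exact ⟨Finset.mem_univ _, (hW x hx.2).1⟩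
  have hΔq2 : (2:ℚ) ≤ (G.maxDegree : ℚ) := by exact_mod_cast hΔ2
  -- per-vertex bound
  have key : ∀ v ∈ P, (1 + ((Z.filter (fun x => W x = v)).card : ℚ)) ≤
      2 * ((G.maxDegree:ℚ)^2 - (G.maxDegree:ℚ) + 1) * vU G χ v := by
    intro v hv
    rw [hP, Finset.mem_filter] at hv
    have hv0 : vU G χ v ≠ 0 := hv.2
    set s := ((G.neighborFinset v).filter (fun w => χ w = χ v)).card with hsdef
    have hs1 : 1 ≤ s := by
      rcases Nat.eq_zero_or_pos s with h | h
      · exfalso; apply hv0; rw [vU, ← hsdef, h]; simp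
      · exact h
    have hdv := hdpos v
    have hsd : s ≤ G.degree v := by
      rw [hsdef, ← hcardN v]; exact Finset.card_filter_le _ _
    set O := (G.neighborFinset v).filter (fun w => ¬ χ w = χ v) with hOdef
    have hOs : s + O.card = G.degree v := by
      rw [hsdef, hOdef, ← hcardN v]
      exact Finset.card_filter_add_card_filter_not _
    have hvU : vU G χ v = (s : ℚ) / (G.degree v : ℚ) := by rw [vU, hsdef]
    have hmem : ∀ x ∈ Z.filter (fun x => W x = v),
        x ∈ O ∨ ((1:ℚ)/2 ≤ vU G χ v ∧ ∃ y ∈ O, x ∈ (G.neighborFinset y).erase v) := by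
      intro x hx
      rw [Finset.mem_filter] at hx
      obtain ⟨hxZ, hxW⟩ := hx
      rw [hZ, Finset.mem_filter] at hxZ
      have hx0 := hxZ.2
      obtain ⟨hne0, hcase, _⟩ := hW x hx0
      rw [hxW] at hcase
      rcases hcase with hadj | ⟨hhalf, y, hxy, hy0, hyv⟩
      · left
        rw [hOdef, Finset.mem_filter]
        exact ⟨(G.mem_neighborFinset _ _).mpr hadj.symm, (hzero' x hx0 v hadj).symm⟩
      · right
        refine ⟨hhalf, y, ?_, ?_⟩
        · rw [hOdef, Finset.mem_filter]
          exact ⟨(G.mem_neighborFinset _ _).mpr hyv.symm, (hzero' y hy0 v hyv).symm⟩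
        · rw [Finset.mem_erase]
          refine ⟨fun h => hv0 (h ▸ hx0), (G.mem_neighborFinset _ _).mpr hxy.symm⟩
    have hdq := hdQ v
    have hOq : (O.card : ℚ) = (G.degree v : ℚ) - (s : ℚ) := by
      have : (s : ℚ) + (O.card : ℚ) = (G.degree v : ℚ) := by exact_mod_cast hOs
      linarith
    have hs1q : (1:ℚ) ≤ (s:ℚ) := by exact_mod_cast hs1
    have hsdq : (s:ℚ) ≤ (G.degree v : ℚ) := by exact_mod_cast hsd
    have hdΔq : (G.degree v : ℚ) ≤ (G.maxDegree : ℚ) := by exact_mod_cast hdΔ v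
    rw [hvU, show (2 * ((G.maxDegree:ℚ)^2 - (G.maxDegree:ℚ) + 1)) * ((s:ℚ)/(G.degree v : ℚ))
        = (2 * ((G.maxDegree:ℚ)^2 - (G.maxDegree:ℚ) + 1) * (s:ℚ))/(G.degree v : ℚ) from by ring,
      le_div_iff₀ hdq]
    by_cases hhalf : (1:ℚ)/2 ≤ vU G χ v
    · -- chargers within distance 2
      have hsubB : Z.filter (fun x => W x = v) ⊆
          O ∪ O.biUnion (fun y => (G.neighborFinset y).erase v) := by
        intro x hx
        rcases hmem x hx with h | ⟨_, y, hyO, hxy⟩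
        · exact Finset.mem_union_left _ h
        · exact Finset.mem_union_right _ (Finset.mem_biUnion.mpr ⟨y, hyO, hxy⟩)
      have hcardF : (Z.filter (fun x => W x = v)).card ≤ O.card * G.maxDegree := by
        have c1 : (Z.filter (fun x => W x = v)).card ≤
            O.card + ∑ y ∈ O, ((G.neighborFinset y).erase v).card := by
          calc (Z.filter (fun x => W x = v)).card
              ≤ (O ∪ O.biUnion fun y => (G.neighborFinset y).erase v).card :=
                Finset.card_le_card hsubB
            _ ≤ O.card + (O.biUnion fun y => (G.neighborFinset y).erase v).card :=
                Finset.card_union_le _ _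
            _ ≤ O.card + ∑ y ∈ O, ((G.neighborFinset y).erase v).card := by
                gcongr
                exact Finset.card_biUnion_le
        have c2 : ∑ y ∈ O, ((G.neighborFinset y).erase v).card ≤
            ∑ _y ∈ O, (G.maxDegree - 1) := by
          apply Finset.sum_le_sum
          intro y hy
          have hyv : v ∈ G.neighborFinset y := by
            rw [hOdef, Finset.mem_filter] at hy
            have : G.Adj v y := (G.mem_neighborFinset _ _).mp hy.1
            exact (G.mem_neighborFinset _ _).mpr this.symm
          rw [Finset.card_erase_of_mem hyv, hcardN]
          have := hdΔ y; omega
        rw [Finset.sum_const, smul_eq_mul] at c2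
        have c3 : O.card * G.maxDegree = O.card * (G.maxDegree - 1) + O.card * 1 := by
          rw [← Nat.mul_add]; congr 1; omega
        omega
      have hF : ((Z.filter (fun x => W x = v)).card : ℚ) ≤
          ((G.degree v : ℚ) - (s:ℚ)) * (G.maxDegree : ℚ) := by
        have : ((Z.filter (fun x => W x = v)).card : ℚ) ≤ (O.card : ℚ) * (G.maxDegree:ℚ) := by
          exact_mod_cast hcardF
        rwa [hOq] at this
      have hd2s : (G.degree v : ℚ) ≤ 2 * (s:ℚ) := by
        rw [hvU, le_div_iff₀ hdq] at hhalf; linarith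
      have e1 : ((Z.filter (fun x => W x = v)).card : ℚ) * (G.degree v : ℚ) ≤
          (((G.degree v : ℚ) - (s:ℚ)) * (G.maxDegree:ℚ)) * (G.degree v : ℚ) :=
        mul_le_mul_of_nonneg_right hF (le_of_lt hdq)
      have e3 : ((G.degree v : ℚ) - (s:ℚ)) * (G.degree v : ℚ) ≤ (s:ℚ) * (G.maxDegree:ℚ) := by
        apply mul_le_mul (by linarith) hdΔq (le_of_lt hdq) (by linarith)
      nlinarith [mul_le_mul_of_nonneg_right e3 (show (0:ℚ) ≤ (G.maxDegree:ℚ) by linarith),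
        mul_nonneg (mul_nonneg (show (0:ℚ) ≤ (G.maxDegree:ℚ) by linarith)
          (show (0:ℚ) ≤ (s:ℚ) by linarith)) (show (0:ℚ) ≤ (G.maxDegree:ℚ) - 2 by linarith)]
    · -- all chargers adjacent
      have hsubO : Z.filter (fun x => W x = v) ⊆ O := by
        intro x hx
        rcases hmem x hx with h | ⟨hh, _⟩
        · exact h
        · -- need: 1/2 ≤ vU v contradiction
          exact absurd hh hhalf
      have hF : ((Z.filter (fun x => W x = v)).card : ℚ) ≤ (G.degree v : ℚ) - (s:ℚ) := by
        have : ((Z.filter (fun x => W x = v)).card : ℚ) ≤ (O.card : ℚ) := by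
          exact_mod_cast Finset.card_le_card hsubO
        rwa [hOq] at this
      have e1 : (1 + ((Z.filter (fun x => W x = v)).card : ℚ)) * (G.degree v : ℚ) ≤
          (G.degree v : ℚ) * (G.degree v : ℚ) :=
        mul_le_mul_of_nonneg_right (by linarith) (le_of_lt hdq)
      have e2 : (G.degree v : ℚ) * (G.degree v : ℚ) ≤ (G.maxDegree:ℚ) * (G.maxDegree:ℚ) :=
        mul_le_mul hdΔq hdΔq (le_of_lt hdq) (by linarith)
      nlinarith [mul_nonneg (mul_nonneg (show (0:ℚ) ≤ (G.maxDegree:ℚ) - 2 by linarith)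
          (show (0:ℚ) ≤ (G.maxDegree:ℚ) by linarith)) (show (0:ℚ) ≤ (s:ℚ) - 1 by linarith),
        mul_nonneg (show (0:ℚ) ≤ ((G.maxDegree:ℚ) - 1)^2 + 1 by positivity)
          (show (0:ℚ) ≤ (s:ℚ) - 1 by linarith)]
  -- summation
  have hsum : (n : ℚ) ≤ ∑ v ∈ P,
      (2 * ((G.maxDegree:ℚ)^2 - (G.maxDegree:ℚ) + 1) * vU G χ v) := by
    have h1 : (n:ℚ) = ∑ v ∈ P, (1 + ((Z.filter (fun x => W x = v)).card : ℚ)) := by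
      rw [Finset.sum_add_distrib, Finset.sum_const, nsmul_eq_mul, mul_one]
      have h2 : ∑ v ∈ P, ((Z.filter (fun x => W x = v)).card : ℚ) = (Z.card : ℚ) := by
        rw [hfib]; push_cast; ring
      rw [h2]
      have := hPZ
      push_cast [← this]; ring
    rw [h1]
    exact Finset.sum_le_sum key
  calc (n:ℚ) ≤ ∑ v ∈ P, (2 * ((G.maxDegree:ℚ)^2 - (G.maxDegree:ℚ) + 1) * vU G χ v) := hsum
    _ = 2 * ((G.maxDegree:ℚ)^2 - (G.maxDegree:ℚ) + 1) * ∑ v ∈ P, vU G χ v := by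
        rw [← Finset.mul_sum]
    _ ≤ 2 * ((G.maxDegree:ℚ)^2 - (G.maxDegree:ℚ) + 1) * ∑ v, vU G χ v := by
        apply mul_le_mul_of_nonneg_left
        · exact Finset.sum_le_sum_of_subset_of_nonneg (Finset.subset_univ _)
            (fun v _ _ => vU_nonneg G χ v)
        · nlinarith


lemma vU_le_one (χ : V → Fin 2) (v : V) : vU G χ v ≤ 1 := by
  unfold vU
  rcases Nat.eq_zero_or_pos (G.degree v) with h | h
  · simp [h]
  · rw [div_le_one (by exact_mod_cast h)]
    exact_mod_cast (Finset.card_filter_le _ _).trans_eq (G.card_neighborFinset_eq_degree v)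

lemma ssgUtil_eq_vU {A : Type*} (c : A → Fin 2) (σ : A ≃ V) (i : A) :
    ssgUtil G c σ i = vU G (fun v => c (σ.symm v)) (σ i) := by
  unfold ssgUtil vU
  simp

lemma util_swap {A : Type*} (c : A → Fin 2) (σ : A ≃ V) (i j : A)
    (hne : c i ≠ c j) :
    ssgUtil G c (ssgSwap σ i j) i =
      (((G.neighborFinset (σ j)).filter (fun w => w ≠ σ i ∧ c (σ.symm w) = c i)).card : ℚ) /
        (G.degree (σ j) : ℚ) := by
  have h1 : (ssgSwap σ i j) i = σ j := by
    simp [ssgSwap, Equiv.swap_apply_left]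
  unfold ssgUtil
  rw [h1]
  congr 3
  apply Finset.filter_congr
  intro w hw
  have hwj : w ≠ σ j := ((G.mem_neighborFinset _ _).mp hw).ne'
  have hsymm : (ssgSwap σ i j).symm w = σ.symm ((Equiv.swap (σ i) (σ j)) w) := by
    simp [ssgSwap, Equiv.symm_trans_apply]
  rw [hsymm]
  by_cases hwi : w = σ i
  · subst hwi
    simp [Equiv.swap_apply_left, hne.symm]
  · rw [Equiv.swap_apply_of_ne_of_ne hwi hwj]
    simp [hwi]

lemma local_eq_vEq {A : Type*} (c : A → Fin 2) (σ : A ≃ V)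
    (heq : ssgLocalEquilibrium G c σ) : vEq G (fun v => c (σ.symm v)) := by
  intro x y hadj hc
  set i := σ.symm x with hi
  set j := σ.symm y with hj
  have hx : σ i = x := σ.apply_symm_apply x
  have hy : σ j = y := σ.apply_symm_apply y
  have hadj' : G.Adj (σ i) (σ j) := by rw [hx, hy]; exact hadj
  have hcij : c i ≠ c j := hc
  have h2 : ¬(ssgUtil G c σ i < ssgUtil G c (ssgSwap σ i j) i ∧
      ssgUtil G c σ j < ssgUtil G c (ssgSwap σ i j) j) :=
    fun hqr => heq i j hadj' ⟨hcij, hqr⟩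
  rw [not_and_or, not_lt, not_lt] at h2
  have e1 : ssgUtil G c (ssgSwap σ i j) i =
      (((G.neighborFinset y).filter (fun w => w ≠ x ∧ c (σ.symm w) = c i)).card : ℚ) /
        (G.degree y : ℚ) := by
    rw [util_swap G c σ i j hcij, hx, hy]
  have hswapc : ssgSwap σ i j = ssgSwap σ j i := by
    unfold ssgSwap; rw [Equiv.swap_comm]
  have e2 : ssgUtil G c (ssgSwap σ i j) j =
      (((G.neighborFinset x).filter (fun w => w ≠ y ∧ c (σ.symm w) = c j)).card : ℚ) /
        (G.degree x : ℚ) := by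
    rw [hswapc, util_swap G c σ j i hcij.symm, hx, hy]
  rw [e1, e2, ssgUtil_eq_vU, ssgUtil_eq_vU, hx, hy] at h2
  exact h2


end

theorem stmt10 {V A : Type*} [Fintype V] [DecidableEq V] [Fintype A]
    (G : SimpleGraph V) [DecidableRel G.Adj] (hconn : G.Connected)
    (hΔ2 : 2 ≤ G.maxDegree) (hΔ : G.maxDegree ≤ Fintype.card V - 2)
    (c : A → Fin 2) (σ : A ≃ V) (heq : ssgLocalEquilibrium G c σ) :
    (Fintype.card A : ℚ) *
        (1 / (2 * ((G.maxDegree : ℚ) ^ 2 - (G.maxDegree : ℚ) + 1))) ≤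
      ssgWelfare G c σ ∧
    ∀ σ' : A ≃ V,
      ssgWelfare G c σ' ≤
        4 * ((G.maxDegree : ℚ) ^ 2 - (G.maxDegree : ℚ) + 1) * ssgWelfare G c σ := by
  classical
  have hχ := local_eq_vEq G c σ heq
  have hmain := main_bound G hconn hΔ2 hΔ (fun v => c (σ.symm v)) hχ
  have hwel : ∀ τ : A ≃ V, ssgWelfare G c τ = ∑ v, vU G (fun v => c (τ.symm v)) v := by
    intro τ
    unfold ssgWelfare
    calc ∑ i, ssgUtil G c τ i = ∑ i, vU G (fun v => c (τ.symm v)) (τ i) :=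
          Finset.sum_congr rfl (fun i _ => ssgUtil_eq_vU G c τ i)
      _ = ∑ v, vU G (fun v => c (τ.symm v)) v := Equiv.sum_comp τ _
  have hcardA : (Fintype.card A : ℚ) = (Fintype.card V : ℚ) := by
    exact_mod_cast Fintype.card_congr σ
  have hX : (3:ℚ) ≤ (G.maxDegree:ℚ)^2 - (G.maxDegree:ℚ) + 1 := by
    have h2 : (2:ℚ) ≤ (G.maxDegree:ℚ) := by exact_mod_cast hΔ2
    nlinarith
  have hSWnn : 0 ≤ ssgWelfare G c σ := by
    rw [hwel σ]
    exact Finset.sum_nonneg (fun v _ => vU_nonneg G _ v)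
  constructor
  · rw [hwel σ, hcardA, mul_one_div, div_le_iff₀ (by linarith :
      (0:ℚ) < 2 * ((G.maxDegree:ℚ)^2 - (G.maxDegree:ℚ) + 1))]
    linarith [hmain]
  · intro σ'
    have h1 : ssgWelfare G c σ' ≤ (Fintype.card A : ℚ) := by
      unfold ssgWelfare
      calc ∑ i, ssgUtil G c σ' i ≤ ∑ _i : A, (1:ℚ) := by
            apply Finset.sum_le_sum
            intro i _
            rw [ssgUtil_eq_vU]
            exact vU_le_one G _ _
        _ = (Fintype.card A : ℚ) := by simp
    have h2 : (Fintype.card V : ℚ) ≤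
        2 * ((G.maxDegree:ℚ)^2 - (G.maxDegree:ℚ) + 1) * ssgWelfare G c σ := by
      rw [hwel σ]; exact hmain
    have hprod : 0 ≤ ((G.maxDegree:ℚ)^2 - (G.maxDegree:ℚ) + 1) * ssgWelfare G c σ :=
      mul_nonneg (by linarith) hSWnn
    have hn0 : (0:ℚ) ≤ (Fintype.card V : ℚ) := by positivity
    nlinarith [h1, h2, hcardA, hprod]
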